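/- Let p,q ≥ 1, n = p+q. The matrix exponential is injective on the set of admissible elements of 𝔮: if X₁ = g₁⁻¹·λ⁽¹⁾·g₁ and X₂ = g₂⁻¹·λ⁽²⁾·g₂ with g₁,g₂ ∈ SU(p,q) and λ⁽¹⁾, λ⁽²⁾ admissible traceless real diagonal matrices, and exp(X₁) = exp(X₂), then X₁ = X₂. -/

import Mathlib

open Matrix Complex

noncomputable section

/-- The signature matrix J_{p,q} = diag(1,...,1,-1,...,-1). -/
def Jpq (p q : ℕ) : Matrix (Fin (p + q)) (Fin (p + q)) ℂ :=
  Matrix.diagonal (fun i => if (i : ℕ) < p then 1 else -1)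

/-- The group SU(p,q) as a subset of matrices: det = 1 and g* J g = J. -/
def SUpq (p q : ℕ) : Set (Matrix (Fin (p + q)) (Fin (p + q)) ℂ) :=
  {g | g.det = 1 ∧ gᴴ * Jpq p q * g = Jpq p q}

/-- The involution M† = J M* J. -/
def dag (p q : ℕ) (M : Matrix (Fin (p + q)) (Fin (p + q)) ℂ) :
    Matrix (Fin (p + q)) (Fin (p + q)) ℂ :=
  Jpq p q * Mᴴ * Jpq p q

/-- Q = {s ∈ SL(n,ℂ) : s† = s}. -/
def Qset (p q : ℕ) : Set (Matrix (Fin (p + q)) (Fin (p + q)) ℂ) :=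
  {s | s.det = 1 ∧ dag p q s = s}

/-- An admissible traceless real diagonal: entries l, trace zero, and
every entry with index < p strictly exceeds every entry with index ≥ p. -/
def IsAdmissibleDiag (p q : ℕ) (l : Fin (p + q) → ℝ) : Prop :=
  (∑ i, l i = 0) ∧ ∀ i j : Fin (p + q), (i : ℕ) < p → p ≤ (j : ℕ) → l j < l i

/-- exp of a real diagonal matrix, as a complex matrix. -/
def expDiag (p q : ℕ) (l : Fin (p + q) → ℝ) : Matrix (Fin (p + q)) (Fin (p + q)) ℂ :=
  Matrix.diagonal (fun i => (Real.exp (l i) : ℂ))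

/-- Admissible elements of Q: G₀-conjugates of exponentials of admissible diagonals. -/
def IsAdmissibleQ (p q : ℕ) (s : Matrix (Fin (p + q)) (Fin (p + q)) ℂ) : Prop :=
  ∃ g ∈ SUpq p q, ∃ l : Fin (p + q) → ℝ, IsAdmissibleDiag p q l ∧
    s = g⁻¹ * expDiag p q l * g

/-- The group AN: upper triangular, determinant 1, positive real diagonal entries. -/
def ANset (p q : ℕ) : Set (Matrix (Fin (p + q)) (Fin (p + q)) ℂ) :=
  {b | b.det = 1 ∧ (∀ i j : Fin (p + q), j < i → b i j = 0) ∧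
    ∀ i, 0 < (b i i).re ∧ (b i i).im = 0}

/-- Admissible elements of AN: elements whose symmetrization b†b is admissible in Q. -/
def IsAdmissibleAN (p q : ℕ) (b : Matrix (Fin (p + q)) (Fin (p + q)) ℂ) : Prop :=
  b ∈ ANset p q ∧ IsAdmissibleQ p q (dag p q b * b)

/-- The sesquilinear pairing ⟨x,y⟩ = Σ_{i<p} x_i conj(y_i) − Σ_{i≥p} x_i conj(y_i). -/
def pairingC (p q : ℕ) (x y : Fin (p + q) → ℂ) : ℂ :=
  ∑ i : Fin (p + q), (if (i : ℕ) < p then 1 else -1) * (x i * (starRingEnd ℂ) (y i))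

/-- The (real) square norm ‖x‖² = ⟨x,x⟩. -/
def pnormSq (p q : ℕ) (x : Fin (p + q) → ℂ) : ℝ :=
  ∑ i : Fin (p + q), (if (i : ℕ) < p then 1 else -1) * Complex.normSq (x i)

/-- A vector is timelike if ‖x‖² > 0. -/
def Timelike (p q : ℕ) (x : Fin (p + q) → ℂ) : Prop :=
  0 < pnormSq p q x


open Polynomial in
lemma aeval_conj_mat {n : ℕ} (g M : Matrix (Fin n) (Fin n) ℂ) (hg : IsUnit g.det)
    (P : ℂ[X]) : aeval (g⁻¹ * M * g) P = g⁻¹ * aeval M P * g := by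
  have h1 : g * g⁻¹ = 1 := Matrix.mul_nonsing_inv g hg
  have h2 : g⁻¹ * g = 1 := Matrix.nonsing_inv_mul g hg
  induction P using Polynomial.induction_on with
  | C a =>
      simp only [aeval_C]
      rw [mul_assoc, Algebra.commutes a g, ← mul_assoc, h2, one_mul]
  | add p q hp hq =>
      simp only [map_add, hp, hq, mul_add, add_mul]
  | monomial k a hk =>
      rw [pow_succ, ← mul_assoc]
      simp only [_root_.map_mul, aeval_X] at hk ⊢
      rw [hk]
      simp only [Matrix.mul_assoc]
      rw [← Matrix.mul_assoc g g⁻¹ (M * g), h1, Matrix.one_mul]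

open Polynomial in
lemma aeval_diag_mat {n : ℕ} (d : Fin n → ℂ) (P : ℂ[X]) :
    aeval (Matrix.diagonal d) P = Matrix.diagonal (fun i => P.eval (d i)) := by
  have : Matrix.diagonal d = Matrix.diagonalAlgHom ℂ d := rfl
  have hfun : (Polynomial.aeval d P : Fin n → ℂ) = fun i => Polynomial.eval (d i) P := by
    funext i
    rw [show (Polynomial.aeval d P : Fin n → ℂ) i
        = Pi.evalAlgHom ℂ (fun _ => ℂ) i (Polynomial.aeval d P) from rfl,
      ← Polynomial.aeval_algHom_apply (Pi.evalAlgHom ℂ (fun _ => ℂ) i) d P]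
    simp [Polynomial.aeval_def]
  rw [this, Polynomial.aeval_algHom_apply]
  show Matrix.diagonal (Polynomial.aeval d P) = _
  rw [hfun]

/-- the matrix exponential is injective on admissible elements of 𝔮. -/
theorem exp_injective_on_admissible
    (p q : ℕ) (hp : 1 ≤ p) (hq : 1 ≤ q)
    (g₁ g₂ : Matrix (Fin (p + q)) (Fin (p + q)) ℂ)
    (hg₁ : g₁ ∈ SUpq p q) (hg₂ : g₂ ∈ SUpq p q)
    (l₁ l₂ : Fin (p + q) → ℝ)
    (hl₁ : IsAdmissibleDiag p q l₁) (hl₂ : IsAdmissibleDiag p q l₂)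
    (X₁ X₂ : Matrix (Fin (p + q)) (Fin (p + q)) ℂ)
    (hX₁ : X₁ = g₁⁻¹ * Matrix.diagonal (fun i => (l₁ i : ℂ)) * g₁)
    (hX₂ : X₂ = g₂⁻¹ * Matrix.diagonal (fun i => (l₂ i : ℂ)) * g₂)
    (hexp : NormedSpace.exp X₁ = NormedSpace.exp X₂) :
    X₁ = X₂ := by
  classical
  have hd₁ : IsUnit g₁.det := by rw [hg₁.1]; exact isUnit_one
  have hd₂ : IsUnit g₂.det := by rw [hg₂.1]; exact isUnit_one
  set s : Finset ℂ :=
    (Finset.univ.image fun i => ((Real.exp (l₁ i) : ℝ) : ℂ)) ∪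
    (Finset.univ.image fun i => ((Real.exp (l₂ i) : ℝ) : ℂ)) with hs
  set P : Polynomial ℂ :=
    Lagrange.interpolate s id (fun z => ((Real.log z.re : ℝ) : ℂ)) with hPdef
  have hP : ∀ z ∈ s, P.eval z = ((Real.log z.re : ℝ) : ℂ) := by
    intro z hz
    simpa [hPdef] using Lagrange.eval_interpolate_at_node
      (fun z => ((Real.log z.re : ℝ) : ℂ)) (Set.injOn_id _) hz
  have key : ∀ (g : Matrix (Fin (p + q)) (Fin (p + q)) ℂ) (l : Fin (p + q) → ℝ),
      IsUnit g.det → (∀ i, ((Real.exp (l i) : ℝ) : ℂ) ∈ s) →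
      Polynomial.aeval
        (NormedSpace.exp (g⁻¹ * Matrix.diagonal (fun i => ((l i : ℝ) : ℂ)) * g)) P
        = g⁻¹ * Matrix.diagonal (fun i => ((l i : ℝ) : ℂ)) * g := by
    intro g l hgd hmem
    have hgu : IsUnit g := (Matrix.isUnit_iff_isUnit_det g).mpr hgd
    rw [Matrix.exp_conj' g _ hgu, Matrix.exp_diagonal]
    have hexpfun : NormedSpace.exp (fun i => ((l i : ℝ) : ℂ)) =
        fun i => ((Real.exp (l i) : ℝ) : ℂ) := by
      rw [Pi.exp_def]
      funext i
      rw [← Complex.exp_eq_exp_ℂ, ← Complex.ofReal_exp]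
    rw [hexpfun, aeval_conj_mat _ _ hgd, aeval_diag_mat]
    have heq : (fun i => Polynomial.eval ((Real.exp (l i) : ℝ) : ℂ) P)
        = fun i => ((l i : ℝ) : ℂ) := by
      funext i
      rw [hP _ (hmem i), Complex.ofReal_re, Real.log_exp]
    rw [heq]
  have h₁ : Polynomial.aeval (NormedSpace.exp X₁) P = X₁ := by
    rw [hX₁]
    exact key g₁ l₁ hd₁ (fun i => Finset.mem_union_left _
      (Finset.mem_image.mpr ⟨i, Finset.mem_univ i, rfl⟩))
  have h₂ : Polynomial.aeval (NormedSpace.exp X₂) P = X₂ := by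
    rw [hX₂]
    exact key g₂ l₂ hd₂ (fun i => Finset.mem_union_right _
      (Finset.mem_image.mpr ⟨i, Finset.mem_univ i, rfl⟩))
  rw [← h₁, ← h₂, hexp]
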